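/- Let α ∈ (0,1) and m ≥ 1 be such that k := ⌈(m + 1)(1 − α)⌉ ≤ m. Let S₁, …, S_{m+1} be exchangeable real random variables whose values are almost surely pairwise distinct, and let q̂ be the k-th order statistic of S₁, …, S_m. Then P(S_{m+1} ≤ q̂) = k/(m + 1); in particular 1 − α ≤ P(S_{m+1} ≤ q̂) < 1 − α + 1/(m + 1). -/

import Mathlib

open MeasureTheory

/-- A finite family of real random variables is exchangeable if the joint law of the vector
is invariant under every permutation of the indices. -/
def Exchangeable {Ω : Type*} [MeasurableSpace Ω] (ℙ : Measure Ω) {n : ℕ}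
    (S : Fin n → Ω → ℝ) : Prop :=
  ∀ σ : Equiv.Perm (Fin n),
    Measure.map (fun ω => fun i => S (σ i) ω) ℙ = Measure.map (fun ω => fun i => S i ω) ℙ

/-- The `k`-th order statistic (1-indexed) of the values `s 0, …, s (m-1)`:
the `k`-th smallest value when sorted in nondecreasing order. -/
noncomputable def orderStat {m : ℕ} (s : Fin m → ℝ) (k : ℕ) : ℝ :=
  (Multiset.sort (Multiset.map s Finset.univ.val) (· ≤ ·)).getD (k - 1) 0


open Finset MeasureTheory
open scoped ENNReal

lemma mem_iff_lt_card_of_downclosed {n : ℕ} (F : Finset (Fin n))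
    (hF : ∀ j j' : Fin n, j' ≤ j → j ∈ F → j' ∈ F) (j : Fin n) :
    j ∈ F ↔ (j : ℕ) < F.card := by
  constructor
  · intro hj
    have hsub : Finset.Iic j ⊆ F := fun j' hj' => hF j j' (Finset.mem_Iic.1 hj') hj
    have := Finset.card_le_card hsub
    rw [Fin.card_Iic] at this
    omega
  · intro hj
    by_contra hjF
    have hsub : F ⊆ Finset.Iio j := by
      intro j' hj'
      rw [Finset.mem_Iio]
      by_contra h'
      exact hjF (hF j' j (not_lt.1 h') hj')
    have := Finset.card_le_card hsub
    rw [Fin.card_Iio] at this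
    omega

lemma sorted_get_lt (l : List ℝ) (hl : l.Pairwise (· ≤ ·)) (x : ℝ) (i : ℕ) (hi : i < l.length) :
    l.get ⟨i, hi⟩ < x ↔ i < Multiset.countP (fun y => y < x) (l : Multiset ℝ) := by
  classical
  have hcard : Multiset.countP (fun y => y < x) (l : Multiset ℝ)
      = (Finset.univ.filter (fun j : Fin l.length => l.get j < x)).card := by
    have h1 : (Finset.univ.val : Multiset (Fin l.length)).map l.get = (l : Multiset ℝ) := by
      show ((List.finRange l.length : Multiset (Fin l.length))).map l.get = _
      rw [Multiset.map_coe, ← List.ofFn_eq_map, List.ofFn_get]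
    rw [← h1, Multiset.countP_map]
    rfl
  rw [hcard]
  have hF : ∀ j j' : Fin l.length, j' ≤ j →
      j ∈ Finset.univ.filter (fun j => l.get j < x) →
      j' ∈ Finset.univ.filter (fun j => l.get j < x) := by
    intro j j' hle hj
    simp only [Finset.mem_filter, Finset.mem_univ, true_and] at hj ⊢
    exact lt_of_le_of_lt (hl.rel_get_of_le hle) hj
  have h2 := mem_iff_lt_card_of_downclosed _ hF ⟨i, hi⟩
  simp only [Finset.mem_filter, Finset.mem_univ, true_and] at h2
  exact h2



/-- rank of index j among the values of v -/
noncomputable def rank {n : ℕ} (v : Fin n → ℝ) (j : Fin n) : ℕ :=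
  (Finset.univ.filter (fun i => v i ≤ v j)).card

lemma key_det {m k : ℕ} (hk1 : 1 ≤ k) (hk : k ≤ m) (v : Fin (m + 1) → ℝ)
    (hv : Function.Injective v) :
    (v (Fin.last m) ≤ orderStat (fun i : Fin m => v i.castSucc) k) ↔
      rank v (Fin.last m) ≤ k := by
  classical
  set x := v (Fin.last m) with hx
  set s : Multiset ℝ := Multiset.map (fun i : Fin m => v i.castSucc) Finset.univ.val with hs
  set l := Multiset.sort s (· ≤ ·) with hl
  have hlen : l.length = m := by
    rw [hl, Multiset.length_sort, hs, Multiset.card_map]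
    simp
  have hidx : k - 1 < l.length := by omega
  have hget : orderStat (fun i : Fin m => v i.castSucc) k = l.get ⟨k - 1, hidx⟩ := by
    rw [orderStat, List.getD_eq_getElem _ _ hidx]
    rfl
  have hcount : Multiset.countP (fun y => y < x) (l : Multiset ℝ)
      = (Finset.univ.filter (fun i : Fin m => v i.castSucc < x)).card := by
    rw [hl, Multiset.sort_eq, hs, Multiset.countP_map]
    rfl
  have hne : ∀ i : Fin m, v i.castSucc ≠ x := by
    intro i h
    exact absurd (hv h) (Fin.ne_of_lt (Fin.castSucc_lt_last i))
  have hrank : rank v (Fin.last m)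
      = (Finset.univ.filter (fun i : Fin m => v i.castSucc < x)).card + 1 := by
    rw [rank, Finset.card_filter, Finset.card_filter, Fin.sum_univ_castSucc]
    simp only [← hx, le_refl, if_true]
    congr 1
    apply Finset.sum_congr rfl
    intro i _
    congr 1
    simp only [eq_iff_iff]
    exact ⟨fun h => lt_of_le_of_ne h (hne i), le_of_lt⟩
  have hiff := sorted_get_lt l (Multiset.pairwise_sort _ _) x (k - 1) hidx
  rw [hget, ← not_lt, hiff, hcount, hrank]
  omega

lemma rank_mem {n : ℕ} (v : Fin (n + 1) → ℝ) (j : Fin (n + 1)) :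
    rank v j ∈ Finset.Icc 1 (n + 1) := by
  rw [Finset.mem_Icc]
  constructor
  · rw [rank, Nat.one_le_iff_ne_zero, ← Nat.pos_iff_ne_zero, Finset.card_pos]
    exact ⟨j, by simp⟩
  · calc rank v j ≤ Finset.univ.card := Finset.card_filter_le _ _
    _ = n + 1 := by simp

lemma rank_strictMono {n : ℕ} (v : Fin (n + 1) → ℝ) {j j' : Fin (n + 1)}
    (hlt : v j < v j') : rank v j < rank v j' := by
  classical
  have hss : Finset.univ.filter (fun i => v i ≤ v j) ⊂
      Finset.univ.filter (fun i => v i ≤ v j') := by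
    constructor
    · intro i hi
      simp only [Finset.mem_filter, Finset.mem_univ, true_and] at hi ⊢
      exact hi.trans hlt.le
    · intro hsub
      have := hsub (by simp : j' ∈ Finset.univ.filter (fun i => v i ≤ v j'))
      simp only [Finset.mem_filter, Finset.mem_univ, true_and] at this
      exact absurd this (not_le.2 hlt)
  exact Finset.card_lt_card hss

lemma rank_injective {n : ℕ} (v : Fin (n + 1) → ℝ) (hv : Function.Injective v) :
    Function.Injective (rank v) := by
  intro j j' h
  by_contra hne
  rcases lt_trichotomy (v j) (v j') with h' | h' | h'
  · exact absurd h (Nat.ne_of_lt (rank_strictMono v h'))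
  · exact hne (hv h')
  · exact absurd h.symm (Nat.ne_of_lt (rank_strictMono v h'))

lemma rank_surjective {n : ℕ} (v : Fin (n + 1) → ℝ) (hv : Function.Injective v)
    {r : ℕ} (hr : r ∈ Finset.Icc 1 (n + 1)) : ∃ j, rank v j = r := by
  classical
  have himg : Finset.univ.image (rank v) = Finset.Icc 1 (n + 1) := by
    apply Finset.eq_of_subset_of_card_le
    · intro r hr
      obtain ⟨j, _, rfl⟩ := Finset.mem_image.1 hr
      exact rank_mem v j
    · rw [Nat.card_Icc, Finset.card_image_of_injective _ (rank_injective v hv)]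
      simp
  rw [← himg] at hr
  obtain ⟨j, _, hj⟩ := Finset.mem_image.1 hr
  exact ⟨j, hj⟩


lemma rank_measurable {n : ℕ} (j : Fin n) : Measurable (fun v : Fin n → ℝ => rank v j) := by
  classical
  have : (fun v : Fin n → ℝ => rank v j)
      = fun v => ∑ i : Fin n, if v i ≤ v j then 1 else 0 := by
    funext v; rw [rank, Finset.card_filter]
  rw [this]
  exact Finset.measurable_sum _ fun i _ =>
    Measurable.ite (measurableSet_le (measurable_pi_apply i) (measurable_pi_apply j))
      measurable_const measurable_const

lemma rank_comp_perm {n : ℕ} (v : Fin n → ℝ) (σ : Equiv.Perm (Fin n)) (j : Fin n) :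
    rank (fun i => v (σ i)) j = rank v (σ j) := by
  classical
  rw [rank, rank]
  apply Finset.card_bij (fun i _ => σ i)
  · intro i hi
    simp only [Finset.mem_filter, Finset.mem_univ, true_and] at hi ⊢
    exact hi
  · intro i _ i' _ h
    exact σ.injective h
  · intro i hi
    simp only [Finset.mem_filter, Finset.mem_univ, true_and] at hi
    exact ⟨σ.symm i, by simpa using hi, by simp⟩



/-- **Sharp form of the exact recovery theorem.**
For exchangeable, almost surely pairwise distinct scores `S 0, …, S m`, with
`k = ⌈(m+1)(1-α)⌉ ≤ m` and `q̂` the `k`-th order statistic of the first `m` scores, the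
coverage probability equals exactly `k/(m+1)`, hence lies in `[1-α, 1-α+1/(m+1))`. -/
theorem split_conformal_coverage_sharp
    {Ω : Type*} [MeasurableSpace Ω] (ℙ : Measure Ω) [IsProbabilityMeasure ℙ]
    (α : ℝ) (hα : α ∈ Set.Ioo (0 : ℝ) 1) (m : ℕ) (hm : 1 ≤ m)
    (k : ℕ) (hkdef : k = ⌈((m : ℝ) + 1) * (1 - α)⌉₊) (hk : k ≤ m)
    (S : Fin (m + 1) → Ω → ℝ) (hmeas : ∀ i, Measurable (S i))
    (hexch : Exchangeable ℙ S)
    (hdist : ∀ᵐ ω ∂ℙ, ∀ i j : Fin (m + 1), i ≠ j → S i ω ≠ S j ω) :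
    (ℙ {ω | S (Fin.last m) ω ≤
        orderStat (fun i : Fin m => S i.castSucc ω) k}).toReal = (k : ℝ) / ((m : ℝ) + 1) ∧
      1 - α ≤ (ℙ {ω | S (Fin.last m) ω ≤
        orderStat (fun i : Fin m => S i.castSucc ω) k}).toReal ∧
      (ℙ {ω | S (Fin.last m) ω ≤
        orderStat (fun i : Fin m => S i.castSucc ω) k}).toReal <
        1 - α + 1 / ((m : ℝ) + 1) := by
  classical
  obtain ⟨hα0, hα1⟩ := hα
  have hk1 : 1 ≤ k := by
    rw [hkdef]
    have hpos : (0:ℝ) < ((m : ℝ) + 1) * (1 - α) := mul_pos (by positivity) (by linarith)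
    exact Nat.one_le_iff_ne_zero.2 (Nat.pos_iff_ne_zero.1 (Nat.ceil_pos.2 hpos))
  set T : Ω → (Fin (m + 1) → ℝ) := fun ω i => S i ω with hTdef
  have hTmeas : Measurable T := measurable_pi_lambda _ hmeas
  set G : Set Ω := {ω | ∀ i j : Fin (m + 1), i ≠ j → S i ω ≠ S j ω} with hGdef
  have hGc : ℙ Gᶜ = 0 := by
    rw [hGdef, Set.compl_setOf]
    exact ae_iff.1 hdist
  have hGinj : ∀ ω ∈ G, Function.Injective (T ω) := by
    intro ω hω i j hij
    by_contra hne
    exact hω i j hne hij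
  -- the rank events
  set E : Fin (m + 1) → ℕ → Set Ω := fun j r => T ⁻¹' {v | rank v j = r} with hEdef
  have hEmeas : ∀ j r, MeasurableSet (E j r) := fun j r =>
    hTmeas ((rank_measurable j) (measurableSet_singleton r))
  -- exchangeability: all E j r have the same measure
  have hEeq : ∀ j r, ℙ (E j r) = ℙ (E (Fin.last m) r) := by
    intro j r
    have hσ := hexch (Equiv.swap (Fin.last m) j)
    have hA : MeasurableSet {v : Fin (m + 1) → ℝ | rank v (Fin.last m) = r} :=
      (rank_measurable (Fin.last m)) (measurableSet_singleton r)
    have hσmeas : Measurable (fun ω => fun i => S (Equiv.swap (Fin.last m) j i) ω) :=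
      measurable_pi_lambda _ fun i => hmeas _
    have h1 := congrArg (fun μ => μ {v : Fin (m + 1) → ℝ | rank v (Fin.last m) = r}) hσ
    rw [Measure.map_apply hσmeas hA, Measure.map_apply hTmeas hA] at h1
    have h2 : (fun ω => fun i => S (Equiv.swap (Fin.last m) j i) ω) ⁻¹'
        {v : Fin (m + 1) → ℝ | rank v (Fin.last m) = r} = E j r := by
      ext ω
      simp only [Set.mem_preimage, Set.mem_setOf_eq, hEdef]
      rw [show (fun i => S (Equiv.swap (Fin.last m) j i) ω)
            = (fun i => T ω (Equiv.swap (Fin.last m) j i)) from rfl,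
          rank_comp_perm (T ω) (Equiv.swap (Fin.last m) j) (Fin.last m),
          Equiv.swap_apply_left]
    rw [h2] at h1
    exact h1
  have hGfull : ℙ G = 1 := by
    have := measure_inter_conull (μ := ℙ) (s := Set.univ) (t := G) hGc
    rw [Set.univ_inter] at this
    rw [this, measure_univ]
  -- each rank event for the last coordinate has measure 1/(m+1)
  have hEval : ∀ r ∈ Finset.Icc 1 (m + 1), ℙ (E (Fin.last m) r) = ((m : ℝ≥0∞) + 1)⁻¹ := by
    intro r hr
    have hdisj : ((Finset.univ : Finset (Fin (m + 1))) : Set (Fin (m + 1))).PairwiseDisjoint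
        (fun j => E j r ∩ G) := by
      intro j _ j' _ hjj'
      apply Set.disjoint_left.2
      intro ω hω hω'
      obtain ⟨hω1, hω2⟩ := hω
      obtain ⟨hω1', _⟩ := hω'
      exact hjj' (rank_injective (T ω) (hGinj ω hω2) (hω1.trans hω1'.symm))
    have hcover : ⋃ j ∈ (Finset.univ : Finset (Fin (m + 1))), (E j r ∩ G) = G := by
      apply Set.Subset.antisymm
      · intro ω hω
        simp only [Set.mem_iUnion] at hω
        obtain ⟨j, _, _, hω2⟩ := hω
        exact hω2
      · intro ω hω
        obtain ⟨j, hj⟩ := rank_surjective (T ω) (hGinj ω hω) hr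
        simp only [Set.mem_iUnion]
        exact ⟨j, Finset.mem_univ j, hj, hω⟩
    have hsum := measure_biUnion_finset (μ := ℙ) hdisj
      (fun j _ => (hEmeas j r).inter (by
        -- G is measurable
        have : MeasurableSet {v : Fin (m + 1) → ℝ | ∀ i i' : Fin (m + 1), i ≠ i' → v i ≠ v i'} := by
          have : {v : Fin (m + 1) → ℝ | ∀ i i' : Fin (m + 1), i ≠ i' → v i ≠ v i'}
              = ⋂ (i : Fin (m + 1)) (i' : Fin (m + 1)) (_ : i ≠ i'), {v | v i ≠ v i'} := by
            ext v; simp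
          rw [this]
          refine MeasurableSet.iInter fun i => MeasurableSet.iInter fun i' =>
            MeasurableSet.iInter fun _ => ?_
          exact (measurableSet_eq_fun (measurable_pi_apply i) (measurable_pi_apply i')).compl
        have hGpre : G = T ⁻¹' {v | ∀ i i' : Fin (m + 1), i ≠ i' → v i ≠ v i'} := rfl
        rw [hGpre]
        exact hTmeas this))
    rw [hcover, hGfull] at hsum
    have hterm : ∀ j : Fin (m + 1), ℙ (E j r ∩ G) = ℙ (E (Fin.last m) r) := by
      intro j
      rw [measure_inter_conull hGc, hEeq]
    rw [Finset.sum_congr rfl (fun j _ => hterm j), Finset.sum_const, Finset.card_univ] at hsum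
    simp only [Fintype.card_fin, nsmul_eq_mul] at hsum
    have hne0 : ((m : ℝ≥0∞) + 1) ≠ 0 := by simp
    have hnetop : ((m : ℝ≥0∞) + 1) ≠ ⊤ := by simp
    have : ((m : ℝ≥0∞) + 1)⁻¹ * (((m + 1 : ℕ) : ℝ≥0∞) * ℙ (E (Fin.last m) r))
        = ((m : ℝ≥0∞) + 1)⁻¹ * 1 := by rw [← hsum]
    rw [show ((m + 1 : ℕ) : ℝ≥0∞) = (m : ℝ≥0∞) + 1 by push_cast; ring, ← mul_assoc,
      ENNReal.inv_mul_cancel hne0 hnetop, one_mul, mul_one] at this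
    exact this
  -- the coverage event
  set C : Set Ω := {ω | S (Fin.last m) ω ≤ orderStat (fun i : Fin m => S i.castSucc ω) k} with hCdef
  set D : Set Ω := ⋃ r ∈ Finset.Icc 1 k, E (Fin.last m) r with hDdef
  have hCG : C ∩ G = D ∩ G := by
    ext ω
    simp only [Set.mem_inter_iff, and_congr_left_iff]
    intro hω
    have hinj := hGinj ω hω
    have hdet := key_det hk1 hk (T ω) hinj
    have hrm := rank_mem (T ω) (Fin.last m)
    rw [Finset.mem_Icc] at hrm
    constructor
    · intro hc
      have : rank (T ω) (Fin.last m) ≤ k := hdet.1 hc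
      simp only [hDdef, Set.mem_iUnion]
      exact ⟨rank (T ω) (Fin.last m), Finset.mem_Icc.2 ⟨hrm.1, this⟩, rfl⟩
    · intro hd
      simp only [hDdef, Set.mem_iUnion] at hd
      obtain ⟨r, hr, hrank⟩ := hd
      rw [Finset.mem_Icc] at hr
      apply hdet.2
      have : rank (T ω) (Fin.last m) = r := hrank
      omega
  have hPC : ℙ C = (k : ℝ≥0∞) * ((m : ℝ≥0∞) + 1)⁻¹ := by
    have hdisjD : ((Finset.Icc 1 k : Finset ℕ) : Set ℕ).PairwiseDisjoint
        (fun r => E (Fin.last m) r) := by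
      intro r _ r' _ hrr'
      apply Set.disjoint_left.2
      intro ω hω hω'
      exact hrr' ((Eq.symm hω).trans hω')
    have hPD : ℙ D = ∑ r ∈ Finset.Icc 1 k, ℙ (E (Fin.last m) r) :=
      measure_biUnion_finset hdisjD (fun r _ => hEmeas (Fin.last m) r)
    have hsub : ∀ r ∈ Finset.Icc 1 k, r ∈ Finset.Icc 1 (m + 1) := by
      intro r hr
      rw [Finset.mem_Icc] at hr ⊢
      omega
    rw [Finset.sum_congr rfl (fun r hr => hEval r (hsub r hr)), Finset.sum_const,
      Nat.card_Icc, nsmul_eq_mul] at hPD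
    simp only [Nat.add_sub_cancel] at hPD
    calc ℙ C = ℙ (C ∩ G) := (measure_inter_conull hGc).symm
    _ = ℙ (D ∩ G) := by rw [hCG]
    _ = ℙ D := measure_inter_conull hGc
    _ = (k : ℝ≥0∞) * ((m : ℝ≥0∞) + 1)⁻¹ := hPD
  have htoReal : (ℙ C).toReal = (k : ℝ) / ((m : ℝ) + 1) := by
    rw [hPC, ENNReal.toReal_mul, ENNReal.toReal_inv]
    simp only [ENNReal.toReal_natCast]
    rw [show ((m : ℝ≥0∞) + 1).toReal = (m : ℝ) + 1 by
      rw [ENNReal.toReal_add (by simp) (by simp)]; simp]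
    rw [div_eq_mul_inv]
  have hle : ((m : ℝ) + 1) * (1 - α) ≤ (k : ℝ) := by rw [hkdef]; exact Nat.le_ceil _
  have hlt : (k : ℝ) < ((m : ℝ) + 1) * (1 - α) + 1 := by
    rw [hkdef]; exact Nat.ceil_lt_add_one (mul_nonneg (by positivity) (by linarith))
  have hmpos : (0 : ℝ) < (m : ℝ) + 1 := by positivity
  refine ⟨htoReal, ?_, ?_⟩
  · rw [htoReal, le_div_iff₀ hmpos]
    nlinarith
  · rw [htoReal, div_lt_iff₀ hmpos]
    have : (1 - α + 1 / ((m : ℝ) + 1)) * ((m : ℝ) + 1)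
        = ((m : ℝ) + 1) * (1 - α) + 1 := by field_simp
    rw [this]
    exact hlt
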